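/- arXiv:1808.01078 — 2 statements merged into one kernel-verified Lean document; each statement's English description precedes it below -/
import Mathlib

section
/- Let P be a regular n×n complex matrix polynomial of degree d, let ℓ ≥ 1 divide d, let ℒ(λ) be an (ε,n,η,n)-block Kronecker ℓ-ification of P built from a solution M(λ) of (Λ_η(λ^ℓ)^T ⊗ I_n) M(λ) (Λ_ε(λ^ℓ) ⊗ I_n) = P(λ), and let λ0 ∈ ℂ be a simple eigenvalue of P, i.e., a root of the scalar polynomial det P(λ) of multiplicity exactly 1. (a) A nonzero vector w ∈ ℂ^{(d/ℓ)n} satisfies w* ℒ(λ0) = 0 if and only if w = [Λ_η(conj(λ0)^ℓ) ⊗ I_n ; R_ε(conj(λ0)^ℓ) M(λ0)* (Λ_η(conj(λ0)^ℓ) ⊗ I_n)] y for some nonzero y ∈ ℂ^n with y* P(λ0) = 0. (b) If in addition λ0 ≠ 0, then a nonzero w satisfies w* ℒ(λ0) = 0 if and only if w = [conj(λ0)^{εℓ} (Λ_η(conj(λ0)^ℓ) ⊗ I_n) ; −S_ε(conj(λ0)^ℓ) M(λ0)* (Λ_η(conj(λ0)^ℓ) ⊗ I_n)] y for some nonzero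 y with y* P(λ0) = 0. Here (·)* denotes conjugate transpose and conj(λ0) the complex conjugate of λ0. -/
open Matrix BigOperators

noncomputable section

/-- Evaluation at `x` of the matrix polynomial with coefficients `C 0, …, C N`. -/
def mpEval {α β : Type*} (N : ℕ) (C : ℕ → Matrix α β ℂ) (x : ℂ) : Matrix α β ℂ :=
  ∑ i ∈ Finset.range (N + 1), x ^ i • C i

/-- Entrywise derivative of the matrix polynomial, evaluated at `x`. -/
def mpDer {α β : Type*} (N : ℕ) (C : ℕ → Matrix α β ℂ) (x : ℂ) : Matrix α β ℂ :=
  ∑ i ∈ Finset.range (N + 1), ((i : ℂ) * x ^ (i - 1)) • C i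

/-- Spectral norm (operator 2-norm, i.e. largest singular value) of a complex matrix. -/
def sNorm {α β : Type*} [Fintype α] [Fintype β] [DecidableEq β] (A : Matrix α β ℂ) : ℝ :=
  ‖LinearMap.toContinuousLinearMap (Matrix.toEuclideanLin A)‖

/-- Euclidean norm of a complex vector. -/
def vNorm {α : Type*} [Fintype α] (v : α → ℂ) : ℝ :=
  Real.sqrt (∑ i, ‖v i‖ ^ 2)

/-- `Λ_k(x^ℓ) ⊗ I_n`, a `(k+1)n × n` matrix whose `i`-th (0-based) `n × n` block is
`x^(ℓ(k−i)) I_n`. -/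
def LamI (n k l : ℕ) (x : ℂ) : Matrix (Fin (k + 1) × Fin n) (Fin n) ℂ :=
  Matrix.of fun p s => if p.2 = s then x ^ (l * (k - (p.1 : ℕ))) else 0

/-- `L_k(x^ℓ) ⊗ I_n`, a `kn × (k+1)n` matrix. -/
def LkI (n k l : ℕ) (x : ℂ) : Matrix (Fin k × Fin n) (Fin (k + 1) × Fin n) ℂ :=
  Matrix.of fun p q =>
    if p.2 = q.2 then
      if (q.1 : ℕ) = (p.1 : ℕ) then -1
      else if (q.1 : ℕ) = (p.1 : ℕ) + 1 then x ^ l else 0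
    else 0

/-- The degree-`0` coefficient of `L_k(λ^ℓ) ⊗ I_n`. -/
def LkI0 (n k : ℕ) : Matrix (Fin k × Fin n) (Fin (k + 1) × Fin n) ℂ :=
  Matrix.of fun p q => if p.2 = q.2 ∧ (q.1 : ℕ) = (p.1 : ℕ) then -1 else 0

/-- The degree-`ℓ` coefficient of `L_k(λ^ℓ) ⊗ I_n`. -/
def LkI1 (n k : ℕ) : Matrix (Fin k × Fin n) (Fin (k + 1) × Fin n) ℂ :=
  Matrix.of fun p q => if p.2 = q.2 ∧ (q.1 : ℕ) = (p.1 : ℕ) + 1 then 1 else 0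

/-- `R_k(x^ℓ)`: `n × n` blocks `x^(ℓ(i−j)) I_n` for `j ≤ i` (0-based), `0` otherwise. -/
def Rmat (n k l : ℕ) (x : ℂ) : Matrix (Fin k × Fin n) (Fin (k + 1) × Fin n) ℂ :=
  Matrix.of fun p q =>
    if p.2 = q.2 ∧ (q.1 : ℕ) ≤ (p.1 : ℕ) then x ^ (l * ((p.1 : ℕ) - (q.1 : ℕ))) else 0

/-- `S_k(x^ℓ)`: `n × n` blocks `x^(ℓ(k+i−j)) I_n` for `i < j` (0-based), `0` otherwise. -/
def Smat (n k l : ℕ) (x : ℂ) : Matrix (Fin k × Fin n) (Fin (k + 1) × Fin n) ℂ :=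
  Matrix.of fun p q =>
    if p.2 = q.2 ∧ (p.1 : ℕ) < (q.1 : ℕ) then x ^ (l * (k + (p.1 : ℕ) - (q.1 : ℕ))) else 0

/-- The block column `H(x; p, q, N) = [Λ_p(x^ℓ) ⊗ I_n ; R_q(x^ℓ) N(x) (Λ_p(x^ℓ) ⊗ I_n)]`. -/
def Hmat (n l p q : ℕ) (N : ℂ → Matrix (Fin (q + 1) × Fin n) (Fin (p + 1) × Fin n) ℂ)
    (x : ℂ) : Matrix ((Fin (p + 1) × Fin n) ⊕ (Fin q × Fin n)) (Fin n) ℂ :=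
  Matrix.of fun r c =>
    Sum.elim (fun a => LamI n p l x a c)
      (fun a => (Rmat n q l x * (N x * LamI n p l x)) a c) r

/-- The block column `G(x; p, q, N) = [x^(qℓ)(Λ_p(x^ℓ) ⊗ I_n) ; −S_q(x^ℓ) N(x) (Λ_p(x^ℓ) ⊗ I_n)]`. -/
def Gmat (n l p q : ℕ) (N : ℂ → Matrix (Fin (q + 1) × Fin n) (Fin (p + 1) × Fin n) ℂ)
    (x : ℂ) : Matrix ((Fin (p + 1) × Fin n) ⊕ (Fin q × Fin n)) (Fin n) ℂ :=
  Matrix.of fun r c =>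
    Sum.elim (fun a => x ^ (q * l) * LamI n p l x a c)
      (fun a => (-(Smat n q l x * (N x * LamI n p l x))) a c) r

/-- Coefficients of the `(ε,n,η,n)`-block Kronecker `ℓ`-ification
`ℒ(λ) = [[M(λ), L_η(λ^ℓ)ᵀ ⊗ I_n], [L_ε(λ^ℓ) ⊗ I_n, 0]]`. -/
def LcalCoef (n l ε η : ℕ)
    (M : ℕ → Matrix (Fin (η + 1) × Fin n) (Fin (ε + 1) × Fin n) ℂ) (i : ℕ) :
    Matrix ((Fin (η + 1) × Fin n) ⊕ (Fin ε × Fin n))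
      ((Fin (ε + 1) × Fin n) ⊕ (Fin η × Fin n)) ℂ :=
  Matrix.fromBlocks (M i)
    (if i = 0 then (LkI0 n η)ᵀ else if i = l then (LkI1 n η)ᵀ else 0)
    (if i = 0 then LkI0 n ε else if i = l then LkI1 n ε else 0) 0

/-- `det P(λ)` as a scalar polynomial, where `P(λ) = Σ_{i=0}^d A_i λ^i`. -/
def detPoly (n d : ℕ) (A : ℕ → Matrix (Fin n) (Fin n) ℂ) : Polynomial ℂ :=
  (∑ i ∈ Finset.range (d + 1), (Polynomial.X : Polynomial ℂ) ^ i • (A i).map Polynomial.C).det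

/-- The horizontal concatenation `[A_0 A_1 ⋯ A_d]`. -/
def rowConcat (n d : ℕ) (A : ℕ → Matrix (Fin n) (Fin n) ℂ) :
    Matrix (Fin n) (Fin (d + 1) × Fin n) ℂ :=
  Matrix.of fun r q => A (q.1 : ℕ) r q.2

/-- Coefficientwise eigenvalue condition number of `Q(λ) = Σ_{i=0}^N C_i λ^i` at the
eigentriple `(v, x0, u)`. -/
def coeffCond {α β : Type*} [Fintype α] [Fintype β] [DecidableEq β] (N : ℕ)
    (C : ℕ → Matrix α β ℂ) (x0 : ℂ) (u : β → ℂ) (v : α → ℂ) : ℝ :=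
  (∑ i ∈ Finset.range (N + 1), ‖x0‖ ^ i * sNorm (C i)) * vNorm u * vNorm v /
    (‖x0‖ * ‖dotProduct (star v) ((mpDer N C x0).mulVec u)‖)

/-- Normwise eigenvalue condition number of `P(λ) = Σ_{i=0}^d A_i λ^i` at `(y, x0, x)`. -/
def normCond (n d : ℕ) (A : ℕ → Matrix (Fin n) (Fin n) ℂ) (x0 : ℂ)
    (x y : Fin n → ℂ) : ℝ :=
  sNorm (rowConcat n d A) * (∑ i ∈ Finset.range (d + 1), ‖x0‖ ^ i) *
      vNorm x * vNorm y /
    (‖x0‖ * ‖dotProduct (star y) ((mpDer d A x0).mulVec x)‖)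

/-- Each `n × n` block of each coefficient `M_t`, `t = 0, …, ℓ`, is `0`, `I_n`,
or one of the coefficients `A_s` of `P`.  -/
def IsCompanionM (n d l ε η : ℕ) (A : ℕ → Matrix (Fin n) (Fin n) ℂ)
    (M : ℕ → Matrix (Fin (η + 1) × Fin n) (Fin (ε + 1) × Fin n) ℂ) : Prop :=
  ∀ t ≤ l, ∀ (i : Fin (η + 1)) (j : Fin (ε + 1)),
    (Matrix.of fun r s => M t (i, r) (j, s)) = 0 ∨
    (Matrix.of fun r s => M t (i, r) (j, s)) = (1 : Matrix (Fin n) (Fin n) ℂ) ∨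
    ∃ s ≤ d, (Matrix.of fun r s' => M t (i, r) (j, s')) = A s


section Aux

lemma range_sum_two' (m c₁ c₂ : ℕ) (h1 : c₁ < m) (h2 : c₂ < m) (hne : c₁ ≠ c₂) (f : ℕ → ℂ)
    (h0 : ∀ j < m, j ≠ c₁ → j ≠ c₂ → f j = 0) :
    ∑ j ∈ Finset.range m, f j = f c₁ + f c₂ := by
  rw [← Finset.sum_pair hne]
  refine (Finset.sum_subset ?_ fun j hj hj' => ?_).symm
  · intro j hj
    simp only [Finset.mem_insert, Finset.mem_singleton] at hj
    rcases hj with rfl | rfl <;> simp [Finset.mem_range, h1, h2]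
  · simp only [Finset.mem_insert, Finset.mem_singleton, not_or] at hj'
    exact h0 j (Finset.mem_range.mp hj) hj'.1 hj'.2

lemma range_sum_one' (m c : ℕ) (h1 : c < m) (f : ℕ → ℂ)
    (h0 : ∀ j < m, j ≠ c → f j = 0) :
    ∑ j ∈ Finset.range m, f j = f c := by
  rw [Finset.sum_eq_single_of_mem c (Finset.mem_range.mpr h1)]
  intro j hj hj'
  exact h0 j (Finset.mem_range.mp hj) hj'

lemma fin_sum_two {m : ℕ} (c₁ c₂ : Fin m) (h : c₁ ≠ c₂) (f : Fin m → ℂ)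
    (h0 : ∀ j, j ≠ c₁ → j ≠ c₂ → f j = 0) :
    ∑ j, f j = f c₁ + f c₂ := by
  rw [← Finset.sum_pair h]
  refine (Finset.sum_subset (Finset.subset_univ _) fun j _ hj => ?_).symm
  simp only [Finset.mem_insert, Finset.mem_singleton, not_or] at hj
  exact h0 j hj.1 hj.2

/-- picks the last block row -/
def Elast (n k : ℕ) : Matrix (Fin n) (Fin (k + 1) × Fin n) ℂ :=
  Matrix.of fun s q => if (q.1 : ℕ) = k ∧ q.2 = s then 1 else 0

/-- picks the first block row -/
def Efirst (n k : ℕ) : Matrix (Fin n) (Fin (k + 1) × Fin n) ℂ :=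
  Matrix.of fun s q => if (q.1 : ℕ) = 0 ∧ q.2 = s then 1 else 0

lemma LkI_mul_LamI (n k l : ℕ) (x : ℂ) : LkI n k l x * LamI n k l x = 0 := by
  ext ⟨i, r⟩ s
  rw [Matrix.mul_apply, Fintype.sum_prod_type]
  simp only [LkI, LamI, Matrix.of_apply, Matrix.zero_apply]
  have hinner : ∀ j : Fin (k+1),
      (∑ t : Fin n, (if r = t then (if (j:ℕ) = (i:ℕ) then -1 else if (j:ℕ) = (i:ℕ)+1 then x^l else 0) else 0) * (if t = s then x ^ (l * (k - (j:ℕ))) else 0))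
      = (if r = s then (if (j:ℕ) = (i:ℕ) then -1 else if (j:ℕ) = (i:ℕ)+1 then x^l else 0) * x ^ (l * (k - (j:ℕ))) else 0) := by
    intro j
    simp [ite_mul, mul_ite, Finset.sum_ite_eq]
  rw [Finset.sum_congr rfl fun j _ => hinner j]
  by_cases hrs : r = s
  · simp only [hrs, if_true]
    rw [Fin.sum_univ_eq_sum_range (fun j => (if j = (i:ℕ) then (-1:ℂ) else if j = (i:ℕ)+1 then x^l else 0) * x ^ (l * (k - j)))]
    rw [range_sum_two' (k+1) i ((i:ℕ)+1) (by omega) (by omega) (by omega)]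
    · have h2 : k - (i:ℕ) = (k - ((i:ℕ)+1)) + 1 := by omega
      simp only [if_pos rfl, if_neg (by omega : ¬ (i:ℕ) = (i:ℕ)+1)]
      rw [h2, mul_add, mul_one, pow_add]
      rw [if_pos trivial, if_neg (show ¬((i:ℕ) + 1 = (i:ℕ)) by omega), if_pos trivial]
      ring
    · intro j _ hj1 hj2
      simp [hj1, hj2]
  · simp [hrs]

lemma Rt_mul_LkI (n k l : ℕ) (x : ℂ) :
    (Rmat n k l x)ᵀ * LkI n k l x = LamI n k l x * Elast n k - 1 := by
  ext ⟨j, s⟩ ⟨j', s'⟩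
  have hjk := j.isLt
  have hj'k := j'.isLt
  have hE : ((LamI n k l x * Elast n k) (j, s) (j', s') : ℂ)
      = if (j':ℕ) = k ∧ s' = s then x ^ (l * (k - (j:ℕ))) else 0 := by
    rw [Matrix.mul_apply, Finset.sum_eq_single s]
    · by_cases h1 : (j':ℕ) = k <;> by_cases h2 : s' = s <;>
        simp [LamI, Elast, h1, h2]
    · intro t _ hts
      simp [LamI, Elast, Ne.symm hts]
    · simp
  have hL : (((Rmat n k l x)ᵀ * LkI n k l x) (j, s) (j', s') : ℂ)
      = ∑ i ∈ Finset.range k, (if s = s' then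
          (if (j:ℕ) ≤ i then x ^ (l * (i - (j:ℕ))) else 0) *
          (if (j':ℕ) = i then -1 else if (j':ℕ) = i+1 then x^l else 0) else 0) := by
    have hinner : ∀ i : Fin k, (∑ t : Fin n, (Rmat n k l x)ᵀ (j, s) (i, t) * LkI n k l x (i, t) (j', s'))
        = (if s = s' then (if (j:ℕ) ≤ (i:ℕ) then x ^ (l * ((i:ℕ) - (j:ℕ))) else 0) *
            (if (j':ℕ) = (i:ℕ) then -1 else if (j':ℕ) = (i:ℕ)+1 then x^l else 0) else 0) := by
      intro i
      rw [Finset.sum_eq_single s]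
      · simp only [Rmat, LkI, Matrix.transpose_apply, Matrix.of_apply]
        by_cases h2 : s = s' <;> simp [h2, ite_and]
      · intro t _ hts
        simp [Rmat, Matrix.transpose_apply, hts, ite_and]
      · simp
    rw [Matrix.mul_apply, Fintype.sum_prod_type, Finset.sum_congr rfl (fun i _ => hinner i),
      Fin.sum_univ_eq_sum_range (fun i => if s = s' then (if (j:ℕ) ≤ i then x ^ (l * (i - (j:ℕ))) else 0) * (if (j':ℕ) = i then -1 else if (j':ℕ) = i+1 then (x:ℂ)^l else 0) else 0)]
  rw [Matrix.sub_apply, Matrix.one_apply, hE, hL]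
  by_cases hss : s = s'
  · subst hss
    simp only [if_true, and_true, if_pos rfl]
    rcases lt_trichotomy (j':ℕ) (j:ℕ) with hlt | heq | hgt
    · rw [Finset.sum_eq_zero (fun i hi => by simp only [Finset.mem_range] at hi; split_ifs <;> first | ring1 | (exfalso; omega)),
        if_neg (by omega), if_neg (by simp [Prod.ext_iff, Fin.ext_iff]; omega)]
      ring
    · by_cases hjk' : (j:ℕ) < k
      · rw [range_sum_one' k (j:ℕ) hjk' _ (fun i hi2 hi => by split_ifs <;> first | ring1 | (exfalso; omega)),
          if_pos (le_refl (j:ℕ)), if_pos heq, if_neg (by omega),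
          if_pos (by simp [Prod.ext_iff, Fin.ext_iff]; omega)]
        simp
      · rw [Finset.sum_eq_zero (fun i hi => by simp only [Finset.mem_range] at hi; split_ifs <;> first | ring1 | (exfalso; omega)),
          if_pos (show (j':ℕ) = k by omega), if_pos (by simp [Prod.ext_iff, Fin.ext_iff]; omega)]
        have hk0 : k - (j:ℕ) = 0 := by omega
        rw [hk0]
        simp
    · by_cases hj'k' : (j':ℕ) < k
      · rw [range_sum_two' k ((j':ℕ) - 1) (j':ℕ) (by omega) (by omega) (by omega) _
          (fun i hi2 h1 h2 => by split_ifs <;> first | ring1 | (exfalso; omega)),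
          if_pos (by omega : (j:ℕ) ≤ (j':ℕ) - 1), if_pos (by omega : (j:ℕ) ≤ (j':ℕ)),
          if_neg (by omega : ¬ (j':ℕ) = (j':ℕ) - 1), if_pos (by omega : (j':ℕ) = ((j':ℕ)-1)+1),
          if_pos rfl, if_neg (by omega), if_neg (by simp [Prod.ext_iff, Fin.ext_iff]; omega)]
        rw [show l * ((j':ℕ) - (j:ℕ)) = l * ((j':ℕ) - 1 - (j:ℕ)) + l by
          rw [show (j':ℕ) - (j:ℕ) = ((j':ℕ) - 1 - (j:ℕ)) + 1 by omega]; ring, pow_add]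
        ring
      · rw [range_sum_one' k (k-1) (by omega) _
          (fun i hi2 hi => by split_ifs <;> first | ring1 | (exfalso; omega)),
          if_pos (by omega : (j:ℕ) ≤ k - 1), if_neg (by omega : ¬ (j':ℕ) = k - 1),
          if_pos (by omega : (j':ℕ) = (k-1)+1), if_pos (show (j':ℕ) = k by omega),
          if_neg (by simp [Prod.ext_iff, Fin.ext_iff]; omega)]
        rw [show l * (k - (j:ℕ)) = l * (k - 1 - (j:ℕ)) + l by
          rw [show k - (j:ℕ) = (k - 1 - (j:ℕ)) + 1 by omega]; ring, pow_add]
        ring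
  · rw [Finset.sum_eq_zero (fun i _ => if_neg hss), if_neg (by tauto),
      if_neg (by simp [Prod.ext_iff]; tauto)]
    ring

lemma St_mul_LkI (n k l : ℕ) (x : ℂ) :
    (Smat n k l x)ᵀ * LkI n k l x
      = x ^ (l * k) • (1 : Matrix (Fin (k+1) × Fin n) (Fin (k+1) × Fin n) ℂ)
        - LamI n k l x * Efirst n k := by
  ext ⟨j, s⟩ ⟨j', s'⟩
  have hjk := j.isLt
  have hj'k := j'.isLt
  have hE : ((LamI n k l x * Efirst n k) (j, s) (j', s') : ℂ)
      = if (j':ℕ) = 0 ∧ s' = s then x ^ (l * (k - (j:ℕ))) else 0 := by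
    rw [Matrix.mul_apply, Finset.sum_eq_single s]
    · by_cases h1 : (j':ℕ) = 0 <;> by_cases h2 : s' = s <;>
        simp only [Fin.val_eq_zero_iff] at h1 <;>
        simp [LamI, Efirst, h1, h2]
    · intro t _ hts
      simp [LamI, Efirst, Ne.symm hts]
    · simp
  have hL : (((Smat n k l x)ᵀ * LkI n k l x) (j, s) (j', s') : ℂ)
      = ∑ i ∈ Finset.range k, (if s = s' then
          (if i < (j:ℕ) then x ^ (l * (k + i - (j:ℕ))) else 0) *
          (if (j':ℕ) = i then -1 else if (j':ℕ) = i+1 then x^l else 0) else 0) := by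
    have hinner : ∀ i : Fin k, (∑ t : Fin n, (Smat n k l x)ᵀ (j, s) (i, t) * LkI n k l x (i, t) (j', s'))
        = (if s = s' then (if (i:ℕ) < (j:ℕ) then x ^ (l * (k + (i:ℕ) - (j:ℕ))) else 0) *
            (if (j':ℕ) = (i:ℕ) then -1 else if (j':ℕ) = (i:ℕ)+1 then x^l else 0) else 0) := by
      intro i
      rw [Finset.sum_eq_single s]
      · simp only [Smat, LkI, Matrix.transpose_apply, Matrix.of_apply]
        by_cases h2 : s = s' <;> simp [h2, ite_and]
      · intro t _ hts
        simp [Smat, Matrix.transpose_apply, hts, ite_and]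
      · simp
    rw [Matrix.mul_apply, Fintype.sum_prod_type, Finset.sum_congr rfl (fun i _ => hinner i),
      Fin.sum_univ_eq_sum_range (fun i => if s = s' then (if i < (j:ℕ) then x ^ (l * (k + i - (j:ℕ))) else 0) * (if (j':ℕ) = i then -1 else if (j':ℕ) = i+1 then (x:ℂ)^l else 0) else 0)]
  rw [Matrix.sub_apply, Matrix.smul_apply, Matrix.one_apply, hE, hL, smul_eq_mul, mul_ite,
    mul_one, mul_zero]
  by_cases hss : s = s'
  · subst hss
    simp only [if_true, and_true, if_pos rfl]
    rcases lt_trichotomy (j:ℕ) (j':ℕ) with hgt | heq | hlt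
    · rw [Finset.sum_eq_zero (fun i hi => by simp only [Finset.mem_range] at hi; split_ifs <;> first | ring1 | (exfalso; omega)),
        if_neg (by simp [Prod.ext_iff, Fin.ext_iff]; omega), if_neg (by omega)]
      ring
    · by_cases hj0 : 1 ≤ (j:ℕ)
      · rw [range_sum_one' k ((j:ℕ)-1) (by omega) _
          (fun i hi2 hi => by split_ifs <;> first | ring1 | (exfalso; omega)),
          if_pos (by omega : (j:ℕ)-1 < (j:ℕ)), if_neg (by omega : ¬ (j':ℕ) = (j:ℕ)-1),
          if_pos (by omega : (j':ℕ) = ((j:ℕ)-1)+1),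
          if_pos (by simp [Prod.ext_iff, Fin.ext_iff]; omega), if_neg (by omega)]
        rw [show k + ((j:ℕ)-1) - (j:ℕ) = k - 1 by omega,
          show l * k = l * (k-1) + l by rw [← Nat.mul_succ]; congr 1; omega, pow_add]
        ring
      · rw [Finset.sum_eq_zero (fun i hi => by simp only [Finset.mem_range] at hi; split_ifs <;> first | ring1 | (exfalso; omega)),
          if_pos (by simp [Prod.ext_iff, Fin.ext_iff]; omega),
          if_pos (show (j':ℕ) = 0 by omega)]
        rw [show k - (j:ℕ) = k by omega]
        ring
    · by_cases hj'0 : 1 ≤ (j':ℕ)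
      · rw [range_sum_two' k ((j':ℕ)-1) (j':ℕ) (by omega) (by omega) (by omega) _
          (fun i hi2 h1 h2 => by split_ifs <;> first | ring1 | (exfalso; omega)),
          if_pos (by omega : (j':ℕ)-1 < (j:ℕ)), if_pos (by omega : (j':ℕ) < (j:ℕ)),
          if_neg (by omega : ¬ (j':ℕ) = (j':ℕ)-1), if_pos (by omega : (j':ℕ) = ((j':ℕ)-1)+1),
          if_pos rfl, if_neg (by simp [Prod.ext_iff, Fin.ext_iff]; omega), if_neg (by omega)]
        rw [show l * (k + (j':ℕ) - (j:ℕ)) = l * (k + ((j':ℕ)-1) - (j:ℕ)) + l by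
          rw [show k + (j':ℕ) - (j:ℕ) = (k + ((j':ℕ)-1) - (j:ℕ)) + 1 by omega]; ring, pow_add]
        ring
      · rw [range_sum_one' k 0 (by omega) _
          (fun i hi2 hi => by split_ifs <;> first | ring1 | (exfalso; omega)),
          if_pos (by omega : 0 < (j:ℕ)), if_pos (by omega : (j':ℕ) = 0),
          if_neg (by simp [Prod.ext_iff, Fin.ext_iff]; omega),
          if_pos (show (j':ℕ) = 0 by omega)]
        rw [show k + 0 - (j:ℕ) = k - (j:ℕ) by omega]
        ring
  · rw [Finset.sum_eq_zero (fun i _ => if_neg hss), if_neg (by simp [Prod.ext_iff]; tauto),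
      if_neg (by tauto)]
    ring

lemma vecMul_LkI_eq_zero (n k l : ℕ) (x : ℂ) (v : Fin k × Fin n → ℂ)
    (h : v ᵥ* (LkI n k l x) = 0) : v = 0 := by
  have hcol : ∀ (c : Fin (k+1)) (s' : Fin n),
      (∑ i : Fin k, v (i, s') * (if (c:ℕ) = (i:ℕ) then -1 else if (c:ℕ) = (i:ℕ)+1 then x^l else 0)) = 0 := by
    intro c s'
    have hthis := congrFun h (c, s')
    rw [Matrix.vecMul, dotProduct, Fintype.sum_prod_type, Pi.zero_apply] at hthis
    refine Eq.trans (Finset.sum_congr rfl fun i _ => ?_) hthis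
    symm
    rw [Finset.sum_eq_single s']
    · simp [LkI]
    · intro t _ hts
      simp [LkI, hts]
    · simp
  suffices key : ∀ m : ℕ, ∀ hm : m < k, ∀ s : Fin n, v (⟨m, hm⟩, s) = 0 by
    funext p
    obtain ⟨⟨m, hm⟩, s⟩ := p
    exact key m hm s
  intro m
  induction m with
  | zero =>
    intro hm s
    have h0 := hcol ⟨0, by omega⟩ s
    rw [Fintype.sum_eq_single (⟨0, hm⟩ : Fin k) (fun i hi => by
      simp only [ne_eq, Fin.ext_iff] at hi
      rw [if_neg (by simpa using fun hc => hi hc.symm), if_neg (by simp)]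
      ring)] at h0
    simpa using h0
  | succ m ih =>
    intro hm s
    have h0 := hcol ⟨m+1, by omega⟩ s
    rw [fin_sum_two (⟨m, by omega⟩ : Fin k) (⟨m+1, hm⟩ : Fin k) (by simp [Fin.ext_iff])
      _ (fun i hi1 hi2 => by
        simp only [ne_eq, Fin.ext_iff] at hi1 hi2
        simp only [] at hi1 hi2 ⊢
        rw [if_neg (by omega), if_neg (by omega)]
        ring)] at h0
    simp only [] at h0
    rw [if_neg (Nat.succ_ne_self m), if_pos trivial, if_pos trivial, ih (by omega) s] at h0
    simpa using h0

lemma LkI_mulVec_ker (n k l : ℕ) (x : ℂ) (u : Fin (k+1) × Fin n → ℂ)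
    (h : LkI n k l x *ᵥ u = 0) :
    u = LamI n k l x *ᵥ (fun r => u (⟨k, Nat.lt_succ_self k⟩, r)) := by
  have hrow : ∀ (i : Fin k) (r : Fin n),
      (∑ c : Fin (k+1), (if (c:ℕ) = (i:ℕ) then -1 else if (c:ℕ) = (i:ℕ)+1 then x^l else 0) * u (c, r)) = 0 := by
    intro i r
    have hthis := congrFun h (i, r)
    rw [Matrix.mulVec, dotProduct, Fintype.sum_prod_type, Pi.zero_apply] at hthis
    refine Eq.trans (Finset.sum_congr rfl fun c _ => ?_) hthis
    symm
    rw [Finset.sum_eq_single r]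
    · simp [LkI]
    · intro t _ htr
      simp [LkI, Ne.symm htr]
    · simp
  have main : ∀ dd m, ∀ hm : m + dd = k, ∀ r : Fin n,
      u (⟨m, by omega⟩, r) = x ^ (l * dd) * u (⟨k, Nat.lt_succ_self k⟩, r) := by
    intro dd
    induction dd with
    | zero =>
      intro m hm r
      obtain rfl : m = k := by omega
      simp
    | succ dd ih =>
      intro m hm r
      have h0 := hrow ⟨m, by omega⟩ r
      rw [fin_sum_two (⟨m, by omega⟩ : Fin (k+1)) (⟨m+1, by omega⟩ : Fin (k+1)) (by simp [Fin.ext_iff])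
        _ (fun c hc1 hc2 => by
          simp only [ne_eq, Fin.ext_iff] at hc1 hc2
          simp only [] at hc1 hc2 ⊢
          rw [if_neg (by omega), if_neg (by omega)]
          ring)] at h0
      simp only [] at h0
      rw [if_pos trivial, if_neg (Nat.succ_ne_self m), if_pos trivial, ih (m+1) (by omega) r] at h0
      rw [show l * (dd+1) = l*dd + l by ring, pow_add]
      linear_combination -h0
  funext p
  obtain ⟨⟨m, hm⟩, r⟩ := p
  have hmv : (LamI n k l x *ᵥ (fun r => u (⟨k, Nat.lt_succ_self k⟩, r))) (⟨m, hm⟩, r)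
      = x ^ (l * (k - m)) * u (⟨k, Nat.lt_succ_self k⟩, r) := by
    rw [Matrix.mulVec, dotProduct, Finset.sum_eq_single r]
    · simp [LamI]
    · intro t _ htr
      simp [LamI, Ne.symm htr]
    · simp
  rw [hmv, main (k - m) m (by omega) r]

lemma LamI_conjT (n k l : ℕ) (x : ℂ) :
    (LamI n k l x)ᴴ = (LamI n k l (starRingEnd ℂ x))ᵀ := by
  ext s p
  simp only [Matrix.conjTranspose_apply, Matrix.transpose_apply, LamI, Matrix.of_apply,
    apply_ite (star : ℂ → ℂ), star_pow, star_zero]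
  rfl

lemma Rmat_conjT (n k l : ℕ) (x : ℂ) :
    (Rmat n k l x)ᴴ = (Rmat n k l (starRingEnd ℂ x))ᵀ := by
  ext q p
  simp only [Matrix.conjTranspose_apply, Matrix.transpose_apply, Rmat, Matrix.of_apply,
    apply_ite (star : ℂ → ℂ), star_pow, star_zero]
  rfl

lemma Smat_conjT (n k l : ℕ) (x : ℂ) :
    (Smat n k l x)ᴴ = (Smat n k l (starRingEnd ℂ x))ᵀ := by
  ext q p
  simp only [Matrix.conjTranspose_apply, Matrix.transpose_apply, Smat, Matrix.of_apply,
    apply_ite (star : ℂ → ℂ), star_pow, star_zero]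
  rfl

lemma vecMul_smulM {m o : Type*} [Fintype m] (v : m → ℂ) (c : ℂ) (A : Matrix m o ℂ) :
    v ᵥ* (c • A) = c • (v ᵥ* A) := by
  funext j
  simp only [Matrix.vecMul, dotProduct, Matrix.smul_apply, smul_eq_mul, Pi.smul_apply,
    Finset.mul_sum]
  apply Finset.sum_congr rfl
  intro i _
  ring

lemma sum_elim_eq_zero_iff {α β : Type*} (f : α → ℂ) (g : β → ℂ) :
    Sum.elim f g = 0 ↔ f = 0 ∧ g = 0 := by
  constructor
  · intro h
    exact ⟨funext fun a => congrFun h (Sum.inl a), funext fun b => congrFun h (Sum.inr b)⟩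
  · rintro ⟨h1, h2⟩
    funext r
    cases r with
    | inl a => exact congrFun h1 a
    | inr b => exact congrFun h2 b

lemma mpEval_Lcal (n l ε η : ℕ) (hl : 1 ≤ l)
    (M : ℕ → Matrix (Fin (η + 1) × Fin n) (Fin (ε + 1) × Fin n) ℂ) (x : ℂ) :
    mpEval l (LcalCoef n l ε η M) x =
      Matrix.fromBlocks (mpEval l M x) (LkI n η l x)ᵀ (LkI n ε l x) 0 := by
  have happ : ∀ a b, mpEval l (LcalCoef n l ε η M) x a b
      = ∑ i ∈ Finset.range (l+1), x^i * (LcalCoef n l ε η M i) a b := by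
    intro a b
    simp [mpEval, Matrix.sum_apply]
  ext a b
  rcases a with a | a <;> rcases b with b | b <;> rw [happ]
  · simp [LcalCoef, mpEval, Matrix.sum_apply]
  · rw [range_sum_two' (l+1) 0 l (by omega) (by omega) (by omega) _
      (fun i hi h0 hl' => by simp [LcalCoef, h0, hl'])]
    simp only [LcalCoef, Matrix.fromBlocks_apply₁₂, if_pos rfl, if_true,
      if_neg (by omega : ¬ l = 0), pow_zero, one_mul]
    obtain ⟨i1, r⟩ := a
    obtain ⟨j1, t⟩ := b
    simp only [LkI, LkI0, LkI1, Matrix.of_apply, Matrix.transpose_apply, ite_and]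
    split_ifs <;> first | ring1 | (exfalso; omega)
  · rw [range_sum_two' (l+1) 0 l (by omega) (by omega) (by omega) _
      (fun i hi h0 hl' => by simp [LcalCoef, h0, hl'])]
    simp only [LcalCoef, Matrix.fromBlocks_apply₂₁, if_pos rfl, if_true,
      if_neg (by omega : ¬ l = 0), pow_zero, one_mul]
    obtain ⟨i1, r⟩ := a
    obtain ⟨j1, t⟩ := b
    simp only [LkI, LkI0, LkI1, Matrix.of_apply, ite_and]
    split_ifs <;> first | ring1 | (exfalso; omega)
  · simp [LcalCoef]

lemma Hmat_mulVec (n l p q : ℕ) (N : ℂ → Matrix (Fin (q + 1) × Fin n) (Fin (p + 1) × Fin n) ℂ)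
    (x : ℂ) (y : Fin n → ℂ) :
    Hmat n l p q N x *ᵥ y
      = Sum.elim (LamI n p l x *ᵥ y) ((Rmat n q l x * (N x * LamI n p l x)) *ᵥ y) := by
  funext r
  cases r <;> rfl

lemma Gmat_mulVec (n l p q : ℕ) (N : ℂ → Matrix (Fin (q + 1) × Fin n) (Fin (p + 1) × Fin n) ℂ)
    (x : ℂ) (y : Fin n → ℂ) :
    Gmat n l p q N x *ᵥ y
      = Sum.elim (x ^ (q*l) • (LamI n p l x *ᵥ y))
          (-((Smat n q l x * (N x * LamI n p l x)) *ᵥ y)) := by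
  funext r
  cases r with
  | inl a =>
    simp only [Matrix.mulVec, dotProduct, Gmat, Matrix.of_apply, Sum.elim_inl,
      Pi.smul_apply, smul_eq_mul, Finset.mul_sum]
    apply Finset.sum_congr rfl
    intro c _
    ring
  | inr a =>
    simp only [Matrix.mulVec, dotProduct, Gmat, Matrix.of_apply, Sum.elim_inr,
      Pi.neg_apply, Matrix.neg_apply, neg_mul, Finset.sum_neg_distrib]

end Aux


/-- Left eigenvector formulas for a simple eigenvalue `lam0` of `P`:
(a) a nonzero `w` satisfies `w* ℒ(lam0) = 0` iff
`w = [Λ_η(conj lam0 ^ ℓ) ⊗ I_n ; R_ε(conj lam0 ^ ℓ) M(lam0)* (Λ_η(conj lam0 ^ ℓ) ⊗ I_n)] y`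
for some nonzero `y` with `y* P(lam0) = 0`; (b) if moreover `lam0 ≠ 0`, the analogous
statement with the `G`-shaped block column. -/
theorem stmt12 (n d l ε η : ℕ) (hn : 0 < n) (hl : 1 ≤ l) (hd : d = l * (ε + η + 1))
    (A : ℕ → Matrix (Fin n) (Fin n) ℂ) (hdeg : A d ≠ 0)
    (hreg : detPoly n d A ≠ 0)
    (M : ℕ → Matrix (Fin (η + 1) × Fin n) (Fin (ε + 1) × Fin n) ℂ)
    (hM : ∀ x : ℂ, (LamI n η l x)ᵀ * mpEval l M x * LamI n ε l x = mpEval d A x)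
    (lam0 : ℂ) (hsimple : (detPoly n d A).rootMultiplicity lam0 = 1) :
    (∀ w : ((Fin (η + 1) × Fin n) ⊕ (Fin ε × Fin n)) → ℂ, w ≠ 0 →
        ((mpEval l (LcalCoef n l ε η M) lam0).vecMul (star w) = 0 ↔
          ∃ y : Fin n → ℂ, y ≠ 0 ∧ (mpEval d A lam0).vecMul (star y) = 0 ∧
            w = (Hmat n l η ε (fun _ => (mpEval l M lam0)ᴴ)
                  (starRingEnd ℂ lam0)).mulVec y)) ∧
      (lam0 ≠ 0 →
        ∀ w : ((Fin (η + 1) × Fin n) ⊕ (Fin ε × Fin n)) → ℂ, w ≠ 0 →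
          ((mpEval l (LcalCoef n l ε η M) lam0).vecMul (star w) = 0 ↔
            ∃ y : Fin n → ℂ, y ≠ 0 ∧ (mpEval d A lam0).vecMul (star y) = 0 ∧
              w = (Gmat n l η ε (fun _ => (mpEval l M lam0)ᴴ)
                    (starRingEnd ℂ lam0)).mulVec y)) := by
  classical
  have hconj : starRingEnd ℂ (starRingEnd ℂ lam0) = lam0 := Complex.conj_conj lam0
  have hsxb : (star (starRingEnd ℂ lam0) : ℂ) = lam0 := by
    rw [starRingEnd_apply, star_star]
  have hsplit : ∀ w : ((Fin (η + 1) × Fin n) ⊕ (Fin ε × Fin n)) → ℂ,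
      ((mpEval l (LcalCoef n l ε η M) lam0).vecMul (star w) = 0 ↔
        (star (w ∘ Sum.inl) ᵥ* mpEval l M lam0
            + star (w ∘ Sum.inr) ᵥ* LkI n ε l lam0 = 0 ∧
          star (w ∘ Sum.inl) ᵥ* (LkI n η l lam0)ᵀ = 0)) := by
    intro w
    have hw : star w = Sum.elim (star (w ∘ Sum.inl)) (star (w ∘ Sum.inr)) := by
      funext r; cases r <;> rfl
    show star w ᵥ* _ = 0 ↔ _
    rw [mpEval_Lcal n l ε η hl M lam0, hw, Matrix.vecMul_fromBlocks, Matrix.vecMul_zero,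
      add_zero, sum_elim_eq_zero_iff]
    simp only [Sum.elim_comp_inl, Sum.elim_comp_inr]
  have hw1L : ∀ y : Fin n → ℂ,
      star (LamI n η l (starRingEnd ℂ lam0) *ᵥ y) ᵥ* (LkI n η l lam0)ᵀ = 0 := by
    intro y
    rw [Matrix.star_mulVec, LamI_conjT, hconj, Matrix.vecMul_vecMul, ← Matrix.transpose_mul,
      LkI_mul_LamI, Matrix.transpose_zero, Matrix.vecMul_zero]
  have hw1M : ∀ y : Fin n → ℂ,
      star (LamI n η l (starRingEnd ℂ lam0) *ᵥ y) ᵥ* mpEval l M lam0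
        = star y ᵥ* ((LamI n η l lam0)ᵀ * mpEval l M lam0) := by
    intro y
    rw [Matrix.star_mulVec, LamI_conjT, hconj, Matrix.vecMul_vecMul]
  have hzH : ∀ y : Fin n → ℂ,
      star ((Rmat n ε l (starRingEnd ℂ lam0) * ((mpEval l M lam0)ᴴ
          * LamI n η l (starRingEnd ℂ lam0))) *ᵥ y) ᵥ* LkI n ε l lam0
        = (star y ᵥ* mpEval d A lam0) ᵥ* Elast n ε
          - star y ᵥ* ((LamI n η l lam0)ᵀ * mpEval l M lam0) := by
    intro y
    rw [Matrix.star_mulVec, Matrix.conjTranspose_mul, Matrix.conjTranspose_mul,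
      Matrix.conjTranspose_conjTranspose, LamI_conjT, Rmat_conjT, hconj,
      Matrix.vecMul_vecMul,
      Matrix.mul_assoc ((LamI n η l lam0)ᵀ * mpEval l M lam0) ((Rmat n ε l lam0)ᵀ) _,
      Rt_mul_LkI, Matrix.mul_sub, Matrix.mul_one, ← Matrix.mul_assoc,
      hM lam0, Matrix.vecMul_sub,
      ← Matrix.vecMul_vecMul (star y) (mpEval d A lam0) (Elast n ε)]
  have hzG : ∀ y : Fin n → ℂ,
      star ((Smat n ε l (starRingEnd ℂ lam0) * ((mpEval l M lam0)ᴴ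
          * LamI n η l (starRingEnd ℂ lam0))) *ᵥ y) ᵥ* LkI n ε l lam0
        = lam0 ^ (ε * l) • (star y ᵥ* ((LamI n η l lam0)ᵀ * mpEval l M lam0))
          - (star y ᵥ* mpEval d A lam0) ᵥ* Efirst n ε := by
    intro y
    rw [Matrix.star_mulVec, Matrix.conjTranspose_mul, Matrix.conjTranspose_mul,
      Matrix.conjTranspose_conjTranspose, LamI_conjT, Smat_conjT, hconj,
      Matrix.vecMul_vecMul,
      Matrix.mul_assoc ((LamI n η l lam0)ᵀ * mpEval l M lam0) ((Smat n ε l lam0)ᵀ) _,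
      St_mul_LkI, Matrix.mul_sub, Matrix.mul_smul, Matrix.mul_one, ← Matrix.mul_assoc,
      hM lam0, Matrix.vecMul_sub, vecMul_smulM,
      ← Matrix.vecMul_vecMul (star y) (mpEval d A lam0) (Efirst n ε), Nat.mul_comm ε l]
  have hextract : ∀ w1 : Fin (η + 1) × Fin n → ℂ,
      star w1 ᵥ* (LkI n η l lam0)ᵀ = 0 →
      star w1 = LamI n η l lam0 *ᵥ
        (star (fun r => w1 (⟨η, Nat.lt_succ_self η⟩, r))) := by
    intro w1 hE2
    have h2' : LkI n η l lam0 *ᵥ star w1 = 0 := by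
      rw [← Matrix.vecMul_transpose]; exact hE2
    exact LkI_mulVec_ker n η l lam0 (star w1) h2'
  have hstarinv : ∀ (w1 : Fin (η + 1) × Fin n → ℂ) (v : Fin n → ℂ),
      star w1 = LamI n η l lam0 *ᵥ star v →
      w1 = LamI n η l (starRingEnd ℂ lam0) *ᵥ v := by
    intro w1 v hh
    have h2 := congrArg star hh
    rw [star_star, Matrix.star_mulVec, star_star, LamI_conjT, Matrix.vecMul_transpose] at h2
    exact h2
  have hAyext : ∀ (w1 : Fin (η + 1) × Fin n → ℂ) (w2 : Fin ε × Fin n → ℂ)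
      (v : Fin n → ℂ),
      star w1 ᵥ* mpEval l M lam0 + star w2 ᵥ* LkI n ε l lam0 = 0 →
      star w1 = LamI n η l lam0 *ᵥ v →
      v ᵥ* mpEval d A lam0 = 0 := by
    intro w1 w2 v hE1 hv
    have h3 := congrArg (fun u => u ᵥ* LamI n ε l lam0) hE1
    simp only [Matrix.add_vecMul, Matrix.vecMul_vecMul, Matrix.zero_vecMul] at h3
    rw [LkI_mul_LamI, Matrix.vecMul_zero, add_zero, hv, ← Matrix.vecMul_transpose,
      Matrix.vecMul_vecMul, ← Matrix.mul_assoc, hM lam0] at h3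
    exact h3
  have hallzero : ∀ w : ((Fin (η + 1) × Fin n) ⊕ (Fin ε × Fin n)) → ℂ,
      star (w ∘ Sum.inl) ᵥ* mpEval l M lam0 + star (w ∘ Sum.inr) ᵥ* LkI n ε l lam0 = 0 →
      w ∘ Sum.inl = 0 → w = 0 := by
    intro w hE1 h1
    have hE1' : star (w ∘ Sum.inr) ᵥ* LkI n ε l lam0 = 0 := by
      rw [h1] at hE1
      simpa using hE1
    have h2 := vecMul_LkI_eq_zero n ε l lam0 _ hE1'
    have h3 := congrArg star h2
    rw [star_star, star_zero] at h3
    funext r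
    cases r with
    | inl a => exact congrFun h1 a
    | inr a => exact congrFun h3 a
  have huniq : ∀ u u' : Fin ε × Fin n → ℂ,
      u ᵥ* LkI n ε l lam0 = u' ᵥ* LkI n ε l lam0 → u = u' := by
    intro u u' hh
    have h2 := vecMul_LkI_eq_zero n ε l lam0 (u - u')
      (by rw [Matrix.sub_vecMul, hh, sub_self])
    exact sub_eq_zero.mp h2
  constructor
  · -- part (a)
    intro w hw
    rw [hsplit w]
    constructor
    · rintro ⟨hE1, hE2⟩
      have hk := hextract (w ∘ Sum.inl) hE2
      set y : Fin n → ℂ := fun r => (w ∘ Sum.inl) (⟨η, Nat.lt_succ_self η⟩, r) with hydef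
      have hw1 : w ∘ Sum.inl = LamI n η l (starRingEnd ℂ lam0) *ᵥ y := hstarinv _ y hk
      have hAy : star y ᵥ* mpEval d A lam0 = 0 := hAyext _ _ (star y) hE1 hk
      have hyne : y ≠ 0 := by
        intro h0
        apply hw
        apply hallzero w hE1
        rw [hw1, h0, Matrix.mulVec_zero]
      refine ⟨y, hyne, hAy, ?_⟩
      show w = _ *ᵥ y
      rw [Hmat_mulVec]
      have hs : star (w ∘ Sum.inr)
          = star ((Rmat n ε l (starRingEnd ℂ lam0) * ((mpEval l M lam0)ᴴ
              * LamI n η l (starRingEnd ℂ lam0))) *ᵥ y) := by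
        apply huniq
        rw [hzH y, hAy, Matrix.zero_vecMul, zero_sub,
          eq_neg_of_add_eq_zero_right hE1, hk, ← Matrix.vecMul_transpose,
          Matrix.vecMul_vecMul]
      have h5 := congrArg star hs
      rw [star_star, star_star] at h5
      funext r
      cases r with
      | inl a => rw [Sum.elim_inl]; exact congrFun hw1 a
      | inr a => rw [Sum.elim_inr]; exact congrFun h5 a
    · rintro ⟨y, hyne, hAy, hwe⟩
      subst hwe
      have h1 : ((Hmat n l η ε (fun _ => (mpEval l M lam0)ᴴ) (starRingEnd ℂ lam0)).mulVec y)
            ∘ Sum.inl = LamI n η l (starRingEnd ℂ lam0) *ᵥ y := by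
        rw [Hmat_mulVec]; rfl
      have h2 : ((Hmat n l η ε (fun _ => (mpEval l M lam0)ᴴ) (starRingEnd ℂ lam0)).mulVec y)
            ∘ Sum.inr = (Rmat n ε l (starRingEnd ℂ lam0) * ((mpEval l M lam0)ᴴ
              * LamI n η l (starRingEnd ℂ lam0))) *ᵥ y := by
        rw [Hmat_mulVec]; rfl
      constructor
      · rw [h1, h2, hw1M y, hzH y, hAy, Matrix.zero_vecMul, zero_sub]
        exact add_neg_cancel _
      · rw [h1]; exact hw1L y
  · -- part (b)
    intro hlam0 w hw
    have hxbne : starRingEnd ℂ lam0 ≠ 0 := by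
      intro h
      apply hlam0
      rw [← hconj, h, map_zero]
    rw [hsplit w]
    constructor
    · rintro ⟨hE1, hE2⟩
      have hk := hextract (w ∘ Sum.inl) hE2
      set y1 : Fin n → ℂ := fun r => (w ∘ Sum.inl) (⟨η, Nat.lt_succ_self η⟩, r) with hy1def
      have hcne : (starRingEnd ℂ lam0) ^ (ε * l) ≠ 0 := pow_ne_zero _ hxbne
      set y : Fin n → ℂ := ((starRingEnd ℂ lam0) ^ (ε * l))⁻¹ • y1 with hydef
      have hy1 : y1 = (starRingEnd ℂ lam0) ^ (ε * l) • y := by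
        rw [hydef, smul_smul, mul_inv_cancel₀ hcne, one_smul]
      have hstary1 : star y1 = lam0 ^ (ε * l) • star y := by
        rw [hy1, star_smul, star_pow, hsxb]
      have hw1 : w ∘ Sum.inl = LamI n η l (starRingEnd ℂ lam0) *ᵥ y1 := hstarinv _ y1 hk
      have hk' : star (w ∘ Sum.inl) = LamI n η l lam0 *ᵥ (lam0 ^ (ε * l) • star y) := by
        rw [hk, ← hstary1]
      have hAy1 : star y1 ᵥ* mpEval d A lam0 = 0 := hAyext _ _ (star y1) hE1 hk
      have hAy : star y ᵥ* mpEval d A lam0 = 0 := by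
        rw [hstary1, Matrix.smul_vecMul] at hAy1
        rcases smul_eq_zero.mp hAy1 with h | h
        · exact absurd h (pow_ne_zero _ hlam0)
        · exact h
      have hyne : y ≠ 0 := by
        intro h0
        apply hw
        apply hallzero w hE1
        rw [hw1, hy1, h0, smul_zero, Matrix.mulVec_zero]
      refine ⟨y, hyne, hAy, ?_⟩
      show w = _ *ᵥ y
      rw [Gmat_mulVec]
      have htop : (starRingEnd ℂ lam0) ^ (ε * l) • (LamI n η l (starRingEnd ℂ lam0) *ᵥ y)
          = LamI n η l (starRingEnd ℂ lam0) *ᵥ y1 := by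
        rw [← Matrix.mulVec_smul, ← hy1]
      have hs : star (w ∘ Sum.inr)
          = star (-((Smat n ε l (starRingEnd ℂ lam0) * ((mpEval l M lam0)ᴴ
              * LamI n η l (starRingEnd ℂ lam0))) *ᵥ y)) := by
        apply huniq
        rw [star_neg, Matrix.neg_vecMul, hzG y, hAy, Matrix.zero_vecMul, sub_zero,
          eq_neg_of_add_eq_zero_right hE1, hk', ← Matrix.vecMul_transpose,
          Matrix.smul_vecMul, Matrix.smul_vecMul, Matrix.vecMul_vecMul]
      have h5 := congrArg star hs
      rw [star_star, star_star] at h5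
      funext r
      cases r with
      | inl a => rw [Sum.elim_inl, htop]; exact congrFun hw1 a
      | inr a => rw [Sum.elim_inr]; exact congrFun h5 a
    · rintro ⟨y, hyne, hAy, hwe⟩
      subst hwe
      have h1 : ((Gmat n l η ε (fun _ => (mpEval l M lam0)ᴴ) (starRingEnd ℂ lam0)).mulVec y)
            ∘ Sum.inl = (starRingEnd ℂ lam0) ^ (ε * l)
              • (LamI n η l (starRingEnd ℂ lam0) *ᵥ y) := by
        rw [Gmat_mulVec]; rfl
      have h2 : ((Gmat n l η ε (fun _ => (mpEval l M lam0)ᴴ) (starRingEnd ℂ lam0)).mulVec y)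
            ∘ Sum.inr = -((Smat n ε l (starRingEnd ℂ lam0) * ((mpEval l M lam0)ᴴ
              * LamI n η l (starRingEnd ℂ lam0))) *ᵥ y) := by
        rw [Gmat_mulVec]; rfl
      constructor
      · rw [h1, h2, star_smul, star_pow, hsxb, Matrix.smul_vecMul, hw1M y, star_neg,
          Matrix.neg_vecMul, hzG y, hAy, Matrix.zero_vecMul, sub_zero]
        exact add_neg_cancel _
      · rw [h1, star_smul, star_pow, hsxb, Matrix.smul_vecMul, hw1L y, smul_zero]

end
end

section
/- Let P(λ) = Σ_{i=0}^d A_i λ^i be an n×n complex matrix polynomial of degree d, let ℓ ≥ 1 and ε, η ≥ 0 be integers with d = ℓ(ε+η+1), and let M(λ) = Σ_{i=0}^ℓ M_i λ^i ∈ ℂ[λ]^{(η+1)n×(ε+1)n} satisfy (Λ_η(λ^ℓ)^T ⊗ I_n) M(λ) (Λ_ε(λ^ℓ) ⊗ I_n) = P(λ). Then max_{0≤i≤ℓ} ‖M_i‖₂ ≥ max_{0≤i≤d} ‖A_i‖₂ / (2 · max{ε+1, η+1}). -/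
open Matrix BigOperators

noncomputable section

open scoped Matrix.Norms.L2Operator

section Helpers

lemma sNorm_eq' {α β : Type*} [Fintype α] [Fintype β] [DecidableEq β] (A : Matrix α β ℂ) :
    sNorm A = ‖A‖ := rfl

def pickL' {k n : ℕ} (i : Fin k) : Matrix (Fin n) (Fin k × Fin n) ℂ :=
  Matrix.of fun r p => if p = (i, r) then 1 else 0

def pickR' {k n : ℕ} (j : Fin k) : Matrix (Fin k × Fin n) (Fin n) ℂ :=
  Matrix.of fun p s => if p = (j, s) then 1 else 0

lemma pickL_norm_le' {k n : ℕ} (i : Fin k) :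
    ‖(pickL' i : Matrix (Fin n) (Fin k × Fin n) ℂ)‖ ≤ 1 := by
  have hmul : pickL' (n := n) i * (pickL' (n := n) i)ᴴ = 1 := by
    ext r r'
    simp only [Matrix.mul_apply, pickL', conjTranspose_apply, Matrix.of_apply, ite_mul, one_mul,
      zero_mul, Matrix.one_apply]
    rw [Finset.sum_ite_eq' Finset.univ ((i, r) : Fin k × Fin n)]
    simp [Prod.ext_iff, eq_comm]
  have h1 : ‖(1 : Matrix (Fin n) (Fin n) ℂ)‖ ≤ 1 := by
    have h := Matrix.l2_opNorm_conjTranspose_mul_self (1 : Matrix (Fin n) (Fin n) ℂ)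
    simp at h
    nlinarith [norm_nonneg (1 : Matrix (Fin n) (Fin n) ℂ)]
  have h2 := Matrix.l2_opNorm_conjTranspose_mul_self
    ((pickL' i : Matrix (Fin n) (Fin k × Fin n) ℂ)ᴴ)
  rw [conjTranspose_conjTranspose, hmul] at h2
  have h3 : ‖((pickL' i : Matrix (Fin n) (Fin k × Fin n) ℂ))ᴴ‖ ≤ 1 := by
    nlinarith [norm_nonneg ((pickL' i : Matrix (Fin n) (Fin k × Fin n) ℂ)ᴴ)]
  rwa [Matrix.l2_opNorm_conjTranspose] at h3

lemma pickR_norm_le' {k n : ℕ} (j : Fin k) :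
    ‖(pickR' j : Matrix (Fin k × Fin n) (Fin n) ℂ)‖ ≤ 1 := by
  have hmul : (pickR' (n := n) j)ᴴ * pickR' (n := n) j = 1 := by
    ext s s'
    simp only [Matrix.mul_apply, pickR', conjTranspose_apply, Matrix.of_apply, Matrix.one_apply]
    have : ∀ p : Fin k × Fin n, (star (if p = (j, s) then (1:ℂ) else 0)) *
        (if p = (j, s') then 1 else 0) = if p = (j, s) then (if p = (j,s') then 1 else 0) else 0 := by
      intro p; split <;> simp
    simp only [this]
    rw [Finset.sum_ite_eq' Finset.univ ((j, s) : Fin k × Fin n)]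
    simp [Prod.ext_iff]
  have h1 : ‖(1 : Matrix (Fin n) (Fin n) ℂ)‖ ≤ 1 := by
    have h := Matrix.l2_opNorm_conjTranspose_mul_self (1 : Matrix (Fin n) (Fin n) ℂ)
    simp at h
    nlinarith [norm_nonneg (1 : Matrix (Fin n) (Fin n) ℂ)]
  have h2 := Matrix.l2_opNorm_conjTranspose_mul_self (pickR' j : Matrix (Fin k × Fin n) (Fin n) ℂ)
  rw [hmul] at h2
  nlinarith [norm_nonneg (pickR' j : Matrix (Fin k × Fin n) (Fin n) ℂ)]

lemma block_eq' {a b n : ℕ} (B : Matrix (Fin a × Fin n) (Fin b × Fin n) ℂ) (i : Fin a)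
    (j : Fin b) :
    (Matrix.of fun r c => B (i, r) (j, c)) =
      (pickL' i : Matrix (Fin n) (Fin a × Fin n) ℂ) * B * (pickR' j : Matrix (Fin b × Fin n) (Fin n) ℂ) := by
  ext r c
  simp only [Matrix.mul_apply, pickL', pickR', Matrix.of_apply, ite_mul, one_mul, zero_mul,
    mul_ite, mul_one, mul_zero]
  rw [Finset.sum_ite_eq' Finset.univ ((j, c) : Fin b × Fin n)]
  simp only [Finset.mem_univ, if_true]
  rw [Finset.sum_ite_eq' Finset.univ ((i, r) : Fin a × Fin n)]
  simp

lemma block_norm_le' {a b n : ℕ} (B : Matrix (Fin a × Fin n) (Fin b × Fin n) ℂ)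
    (i : Fin a) (j : Fin b) : ‖(Matrix.of fun r c => B (i, r) (j, c))‖ ≤ ‖B‖ := by
  rw [block_eq']
  calc ‖pickL' i * B * pickR' j‖ ≤ ‖pickL' i * B‖ * ‖pickR' j‖ := Matrix.l2_opNorm_mul _ _
    _ ≤ ‖pickL' i * B‖ * 1 := mul_le_mul_of_nonneg_left (pickR_norm_le' j) (norm_nonneg _)
    _ = ‖pickL' i * B‖ := mul_one _
    _ ≤ ‖pickL' i‖ * ‖B‖ := Matrix.l2_opNorm_mul _ _
    _ ≤ 1 * ‖B‖ := mul_le_mul_of_nonneg_right (pickL_norm_le' i) (norm_nonneg _)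
    _ = ‖B‖ := one_mul _

lemma coeff_eq_of_sum_eq' {K : ℕ} (f g : ℕ → ℂ)
    (h : ∀ x : ℂ, ∑ k ∈ Finset.range K, f k * x ^ k = ∑ k ∈ Finset.range K, g k * x ^ k)
    {k : ℕ} (hk : k < K) : f k = g k := by
  have hpq : (∑ j ∈ Finset.range K, Polynomial.C (f j) * Polynomial.X ^ j)
      = ∑ j ∈ Finset.range K, Polynomial.C (g j) * Polynomial.X ^ j := by
    apply Polynomial.funext
    intro x
    simpa [Polynomial.eval_finset_sum] using h x
  have h2 := congrArg (fun p : Polynomial ℂ => p.coeff k) hpq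
  simpa [Polynomial.finset_sum_coeff, Polynomial.coeff_C_mul, Polynomial.coeff_X_pow,
    Finset.sum_ite_eq, hk, mul_ite, mul_one, mul_zero, Finset.sum_ite_eq'] using h2

lemma expand' (n l ε η : ℕ) (M : ℕ → Matrix (Fin (η+1) × Fin n) (Fin (ε+1) × Fin n) ℂ)
    (x : ℂ) (r c : Fin n) :
    ((LamI n η l x)ᵀ * mpEval l M x * LamI n ε l x) r c =
      ∑ p ∈ (Finset.univ ×ˢ Finset.univ ×ˢ Finset.range (l+1) :
          Finset (Fin (η+1) × Fin (ε+1) × ℕ)),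
        M p.2.2 (p.1, r) (p.2.1, c) *
          x ^ (l * (η - (p.1:ℕ)) + l * (ε - (p.2.1:ℕ)) + p.2.2) := by
  rw [Finset.sum_product]
  simp only [Finset.sum_product]
  simp only [Matrix.mul_apply, Matrix.transpose_apply, LamI, Matrix.of_apply, mpEval,
    Matrix.sum_apply, Matrix.smul_apply, smul_eq_mul, Fintype.sum_prod_type, ite_mul, mul_ite,
    zero_mul, mul_zero, Finset.sum_ite_eq', Finset.mem_univ, if_true]
  simp only [Finset.sum_mul]
  rw [Finset.sum_comm]
  refine Finset.sum_congr rfl fun i _ => Finset.sum_congr rfl fun j _ => ?_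
  rw [Finset.mul_sum, Finset.sum_mul]
  refine Finset.sum_congr rfl fun t _ => ?_
  rw [pow_add, pow_add]
  ring

lemma card_fiber_le' (l ε η s : ℕ) (hl : 1 ≤ l) :
    (((Finset.univ ×ˢ Finset.univ ×ˢ Finset.range (l+1)) :
        Finset (Fin (η+1) × Fin (ε+1) × ℕ)).filter
      (fun p => l * (η - (p.1:ℕ)) + l * (ε - (p.2.1:ℕ)) + p.2.2 = s)).card ≤ 2 * (η + 1) := by
  have hinj : Set.InjOn (fun p : Fin (η+1) × Fin (ε+1) × ℕ =>
      ((p.1, decide (p.2.2 = l)) : Fin (η+1) × Bool))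
      (((Finset.univ ×ˢ Finset.univ ×ˢ Finset.range (l+1)) :
          Finset (Fin (η+1) × Fin (ε+1) × ℕ)).filter
        (fun p => l * (η - (p.1:ℕ)) + l * (ε - (p.2.1:ℕ)) + p.2.2 = s)) := by
    rintro ⟨i, j, t⟩ hp ⟨i', j', t'⟩ hq heq
    simp only [Finset.coe_filter, Finset.mem_product, Finset.mem_univ, Finset.mem_range,
      Set.mem_setOf_eq, true_and] at hp hq
    obtain ⟨hpt, hps⟩ := hp; obtain ⟨hqt, hqs⟩ := hq
    simp only [Prod.mk.injEq] at heq
    obtain ⟨hi, hflag⟩ := heq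
    subst hi
    have hflag' : (t = l) ↔ (t' = l) := by
      constructor <;> intro h <;> [skip; skip] <;>
        · simp [h] at hflag
          omega
    have hcancel : l * (ε - (j:ℕ)) + t = l * (ε - (j':ℕ)) + t' := by
      have h := hps.trans hqs.symm
      omega
    have hj : (j:ℕ) ≤ ε := Nat.lt_succ_iff.mp j.isLt
    have hj' : (j':ℕ) ≤ ε := Nat.lt_succ_iff.mp j'.isLt
    have htt : t = t' ∧ (j:ℕ) = (j':ℕ) := by
      by_cases ht : t = l
      · have ht' : t' = l := hflag'.mp ht
        have hb : l * (ε - (j:ℕ)) = l * (ε - (j':ℕ)) := by omega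
        have := Nat.eq_of_mul_eq_mul_left (by omega : 0 < l) hb
        exact ⟨by omega, by omega⟩
      · have ht' : t' ≠ l := fun h => ht (hflag'.mpr h)
        have htl : t < l := by omega
        have htl' : t' < l := by omega
        have h1 : (l * (ε - (j:ℕ)) + t) % l = t := by
          rw [Nat.mul_add_mod, Nat.mod_eq_of_lt htl]
        have h2 : (l * (ε - (j':ℕ)) + t') % l = t' := by
          rw [Nat.mul_add_mod, Nat.mod_eq_of_lt htl']
        have ht : t = t' := by rw [← h1, ← h2, hcancel]
        subst ht
        have hb : l * (ε - (j:ℕ)) = l * (ε - (j':ℕ)) := by omega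
        have := Nat.eq_of_mul_eq_mul_left (by omega : 0 < l) hb
        exact ⟨rfl, by omega⟩
    simp only [Prod.mk.injEq]
    exact ⟨trivial, Fin.ext htt.2, htt.1⟩
  have h := Finset.card_le_card_of_injOn _ (fun p _ => Finset.mem_univ
    ((p.1, decide (p.2.2 = l)) : Fin (η+1) × Bool)) hinj
  calc _ ≤ (Finset.univ : Finset (Fin (η+1) × Bool)).card := h
    _ = 2 * (η + 1) := by simp [Finset.card_univ]; ring

end Helpers

/-- Any degree-at-most-`ℓ` solution `M(λ)` of
`(Λ_η(λ^ℓ)ᵀ ⊗ I_n) M(λ) (Λ_ε(λ^ℓ) ⊗ I_n) = P(λ)` satisfies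
`max_i ‖M_i‖₂ ≥ max_i ‖A_i‖₂ / (2 max{ε+1, η+1})`. -/
theorem stmt17 (n d l ε η : ℕ) (hn : 0 < n) (hl : 1 ≤ l) (hd : d = l * (ε + η + 1))
    (A : ℕ → Matrix (Fin n) (Fin n) ℂ) (hdeg : A d ≠ 0)
    (M : ℕ → Matrix (Fin (η + 1) × Fin n) (Fin (ε + 1) × Fin n) ℂ)
    (hM : ∀ x : ℂ, (LamI n η l x)ᵀ * mpEval l M x * LamI n ε l x = mpEval d A x) :
    ((Finset.range (d + 1)).sup' Finset.nonempty_range_add_one fun i => sNorm (A i)) /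
        (2 * max ((ε : ℝ) + 1) ((η : ℝ) + 1)) ≤
      (Finset.range (l + 1)).sup' Finset.nonempty_range_add_one fun i => sNorm (M i) := by
  classical
  have hmax : (0:ℝ) < 2 * max ((ε : ℝ) + 1) ((η : ℝ) + 1) := by positivity
  rw [div_le_iff₀ hmax]
  apply Finset.sup'_le
  intro s hs
  rw [Finset.mem_range] at hs
  have hmaxM0 : (0:ℝ) ≤ (Finset.range (l + 1)).sup' Finset.nonempty_range_add_one
      fun i => sNorm (M i) := by
    refine le_trans ?_ (Finset.le_sup' (fun i => sNorm (M i))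
      (Finset.mem_range.mpr (Nat.succ_pos l)))
    rw [sNorm_eq']
    exact norm_nonneg _
  have hmaps : ∀ p ∈ ((Finset.univ ×ˢ Finset.univ ×ˢ Finset.range (l+1)) :
      Finset (Fin (η+1) × Fin (ε+1) × ℕ)),
      l * (η - (p.1:ℕ)) + l * (ε - (p.2.1:ℕ)) + p.2.2 ∈ Finset.range (d+1) := by
    rintro ⟨i, j, t⟩ hp
    simp only [Finset.mem_product, Finset.mem_univ, Finset.mem_range, true_and] at hp
    have h1 : l * (η - (i:ℕ)) ≤ l * η := Nat.mul_le_mul_left _ (Nat.sub_le _ _)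
    have h2 : l * (ε - (j:ℕ)) ≤ l * ε := Nat.mul_le_mul_left _ (Nat.sub_le _ _)
    have hd' : d = l * ε + l * η + l := by rw [hd]; ring
    simp only [Finset.mem_range]
    omega
  have key : A s = ∑ p ∈ (((Finset.univ ×ˢ Finset.univ ×ˢ Finset.range (l+1)) :
      Finset (Fin (η+1) × Fin (ε+1) × ℕ)).filter
        (fun p => l * (η - (p.1:ℕ)) + l * (ε - (p.2.1:ℕ)) + p.2.2 = s)),
      Matrix.of (fun r c => M p.2.2 (p.1, r) (p.2.1, c)) := by
    ext r c
    have hfun : ∀ x : ℂ, ∑ k ∈ Finset.range (d+1), A k r c * x ^ k =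
        ∑ k ∈ Finset.range (d+1),
          (∑ p ∈ (((Finset.univ ×ˢ Finset.univ ×ˢ Finset.range (l+1)) :
              Finset (Fin (η+1) × Fin (ε+1) × ℕ)).filter
                (fun p => l * (η - (p.1:ℕ)) + l * (ε - (p.2.1:ℕ)) + p.2.2 = k)),
            M p.2.2 (p.1, r) (p.2.1, c)) * x ^ k := by
      intro x
      have hL : ∑ k ∈ Finset.range (d+1), A k r c * x ^ k = mpEval d A x r c := by
        simp [mpEval, Matrix.sum_apply, mul_comm]
      have hR : ∑ k ∈ Finset.range (d+1),
          (∑ p ∈ (((Finset.univ ×ˢ Finset.univ ×ˢ Finset.range (l+1)) :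
              Finset (Fin (η+1) × Fin (ε+1) × ℕ)).filter
                (fun p => l * (η - (p.1:ℕ)) + l * (ε - (p.2.1:ℕ)) + p.2.2 = k)),
            M p.2.2 (p.1, r) (p.2.1, c)) * x ^ k =
          ∑ p ∈ ((Finset.univ ×ˢ Finset.univ ×ˢ Finset.range (l+1)) :
              Finset (Fin (η+1) × Fin (ε+1) × ℕ)),
            M p.2.2 (p.1, r) (p.2.1, c) *
              x ^ (l * (η - (p.1:ℕ)) + l * (ε - (p.2.1:ℕ)) + p.2.2) := by
        rw [← Finset.sum_fiberwise_of_maps_to hmaps (fun p =>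
          M p.2.2 (p.1, r) (p.2.1, c) *
            x ^ (l * (η - (p.1:ℕ)) + l * (ε - (p.2.1:ℕ)) + p.2.2))]
        refine Finset.sum_congr rfl fun k _ => ?_
        rw [Finset.sum_mul]
        refine Finset.sum_congr rfl fun p hp => ?_
        rw [(Finset.mem_filter.mp hp).2]
      rw [hL, hR, ← hM x, expand']
    have hc := coeff_eq_of_sum_eq' _ _ hfun hs
    rw [Matrix.sum_apply]
    exact hc
  calc sNorm (A s) = ‖A s‖ := sNorm_eq' _
    _ = ‖∑ p ∈ (((Finset.univ ×ˢ Finset.univ ×ˢ Finset.range (l+1)) :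
          Finset (Fin (η+1) × Fin (ε+1) × ℕ)).filter
            (fun p => l * (η - (p.1:ℕ)) + l * (ε - (p.2.1:ℕ)) + p.2.2 = s)),
          Matrix.of (fun r c => M p.2.2 (p.1, r) (p.2.1, c))‖ := by rw [← key]
    _ ≤ ∑ p ∈ (((Finset.univ ×ˢ Finset.univ ×ˢ Finset.range (l+1)) :
          Finset (Fin (η+1) × Fin (ε+1) × ℕ)).filter
            (fun p => l * (η - (p.1:ℕ)) + l * (ε - (p.2.1:ℕ)) + p.2.2 = s)),
          ‖Matrix.of (fun r c => M p.2.2 (p.1, r) (p.2.1, c))‖ := norm_sum_le _ _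
    _ ≤ ∑ p ∈ (((Finset.univ ×ˢ Finset.univ ×ˢ Finset.range (l+1)) :
          Finset (Fin (η+1) × Fin (ε+1) × ℕ)).filter
            (fun p => l * (η - (p.1:ℕ)) + l * (ε - (p.2.1:ℕ)) + p.2.2 = s)),
          ((Finset.range (l + 1)).sup' Finset.nonempty_range_add_one fun i => sNorm (M i)) := by
        refine Finset.sum_le_sum fun p hp => ?_
        have hmem := Finset.mem_filter.mp hp
        have hrange : p.2.2 ∈ Finset.range (l+1) := by
          have := (Finset.mem_product.mp hmem.1).2
          exact (Finset.mem_product.mp this).2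
        refine le_trans (block_norm_le' (M p.2.2) p.1 p.2.1) ?_
        rw [← sNorm_eq']
        exact Finset.le_sup' (fun i => sNorm (M i)) hrange
    _ = ((((Finset.univ ×ˢ Finset.univ ×ˢ Finset.range (l+1)) :
          Finset (Fin (η+1) × Fin (ε+1) × ℕ)).filter
            (fun p => l * (η - (p.1:ℕ)) + l * (ε - (p.2.1:ℕ)) + p.2.2 = s)).card : ℝ) *
          ((Finset.range (l + 1)).sup' Finset.nonempty_range_add_one fun i => sNorm (M i)) := by
        rw [Finset.sum_const, nsmul_eq_mul]
    _ ≤ ((2 * (η + 1) : ℕ) : ℝ) *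
          ((Finset.range (l + 1)).sup' Finset.nonempty_range_add_one fun i => sNorm (M i)) := by
        exact mul_le_mul_of_nonneg_right
          (by exact_mod_cast card_fiber_le' l ε η s hl) hmaxM0
    _ ≤ ((Finset.range (l + 1)).sup' Finset.nonempty_range_add_one fun i => sNorm (M i)) *
          (2 * max ((ε : ℝ) + 1) ((η : ℝ) + 1)) := by
        push_cast
        nlinarith [le_max_right ((ε : ℝ) + 1) ((η : ℝ) + 1), hmaxM0]


end
end
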